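/- Let γ ∈ ℝ and p_γ(ξ) = 4π²|ξ|² / (4π²|ξ|² + 2πi γ ξ₁) for ξ ∈ ℝ² \ {0}. Then the partial derivative ∂₁ p_γ(ξ) = 2πi γ (ξ₁² − ξ₂²) / (2π|ξ|² + iγξ₁)², and for all ξ ∈ ℝ² \ {0} one has |ξ₁ ∂₁ p_γ(ξ)| ≤ 1/2. -/

import Mathlib

open Real Complex

/-- The anisotropic parameterization symbol
`p_γ(ξ) = 4π²|ξ|² / (4π²|ξ|² + 2πi γ ξ₁)` for `ξ = (ξ₁, ξ₂) ∈ ℝ²`. -/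
noncomputable def pSymb (γ ξ₁ ξ₂ : ℝ) : ℂ :=
  (4 * (Real.pi : ℂ) ^ 2 * ((ξ₁ : ℂ) ^ 2 + (ξ₂ : ℂ) ^ 2)) /
    (4 * (Real.pi : ℂ) ^ 2 * ((ξ₁ : ℂ) ^ 2 + (ξ₂ : ℂ) ^ 2) +
      2 * (Real.pi : ℂ) * Complex.I * (γ : ℂ) * (ξ₁ : ℂ))

/-- The claimed value of the partial derivative `∂₁ p_γ(ξ)`:
`2πi γ (ξ₁² − ξ₂²) / (2π|ξ|² + iγξ₁)²`. -/
noncomputable def pSymbD1 (γ ξ₁ ξ₂ : ℝ) : ℂ :=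
  (2 * (Real.pi : ℂ) * Complex.I * (γ : ℂ) * ((ξ₁ : ℂ) ^ 2 - (ξ₂ : ℂ) ^ 2)) /
    (2 * (Real.pi : ℂ) * ((ξ₁ : ℂ) ^ 2 + (ξ₂ : ℂ) ^ 2) + Complex.I * (γ : ℂ) * (ξ₁ : ℂ)) ^ 2

/-- For `ξ ∈ ℝ² \ {0}` the symbol `p_γ` is differentiable in `ξ₁` with
`∂₁ p_γ(ξ) = 2πi γ (ξ₁² − ξ₂²) / (2π|ξ|² + iγξ₁)²`, and `|ξ₁ ∂₁ p_γ(ξ)| ≤ 1/2`. -/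
theorem hasDerivAt_pSymb_fst (γ ξ₁ ξ₂ : ℝ) (hξ : (ξ₁, ξ₂) ≠ (0, 0)) :
    HasDerivAt (fun t : ℝ => pSymb γ t ξ₂) (pSymbD1 γ ξ₁ ξ₂) ξ₁ ∧
      ‖(ξ₁ : ℂ) * pSymbD1 γ ξ₁ ξ₂‖ ≤ 1 / 2 := by
  have hπ : (0:ℝ) < Real.pi := Real.pi_pos
  have hor : ξ₁ ≠ 0 ∨ ξ₂ ≠ 0 := by
    by_contra h
    push_neg at h
    exact hξ (by simp [h.1, h.2])
  have hs : 0 < ξ₁ ^ 2 + ξ₂ ^ 2 := by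
    rcases hor with h | h
    · positivity
    · positivity
  have key : (2 * (Real.pi : ℂ) * ((ξ₁ : ℂ) ^ 2 + (ξ₂ : ℂ) ^ 2) + Complex.I * (γ : ℂ) * (ξ₁ : ℂ))
      = ((2 * Real.pi * (ξ₁ ^ 2 + ξ₂ ^ 2) : ℝ) : ℂ) + ((γ * ξ₁ : ℝ) : ℂ) * Complex.I := by
    push_cast; ring
  have hw : (2 * (Real.pi : ℂ) * ((ξ₁ : ℂ) ^ 2 + (ξ₂ : ℂ) ^ 2) +
      Complex.I * (γ : ℂ) * (ξ₁ : ℂ)) ≠ 0 := by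
    rw [key]
    intro h
    have hre := congrArg Complex.re h
    simp only [Complex.add_re, Complex.ofReal_re, Complex.mul_re, Complex.I_re,
      Complex.I_im, Complex.ofReal_im, Complex.zero_re] at hre
    nlinarith [mul_pos hπ hs]
  have hD : (4 * (Real.pi : ℂ) ^ 2 * ((ξ₁ : ℂ) ^ 2 + (ξ₂ : ℂ) ^ 2) +
      2 * (Real.pi : ℂ) * Complex.I * (γ : ℂ) * (ξ₁ : ℂ)) ≠ 0 := by
    intro h
    apply hw
    have hπc : (Real.pi : ℂ) ≠ 0 := by exact_mod_cast hπ.ne'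
    have h2 : 2 * (Real.pi : ℂ) * (2 * (Real.pi : ℂ) * ((ξ₁ : ℂ) ^ 2 + (ξ₂ : ℂ) ^ 2) +
        Complex.I * (γ : ℂ) * (ξ₁ : ℂ)) = 0 := by rw [← h]; ring
    rcases mul_eq_zero.1 h2 with h' | h'
    · exact absurd h' (by simp [hπc])
    · exact h'
  constructor
  · -- derivative
    have hre : HasDerivAt (fun t : ℝ => ((t : ℂ))) 1 ξ₁ := by
      simpa using (hasDerivAt_id ξ₁).ofReal_comp
    have hsq : HasDerivAt (fun t : ℝ => ((t : ℂ)) ^ 2) (2 * (ξ₁ : ℂ)) ξ₁ := by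
      have h2 := hre.mul hre
      simp only [one_mul, mul_one] at h2
      simpa [sq, two_mul, Pi.mul_def] using h2
    have hN : HasDerivAt (fun t : ℝ => 4 * (Real.pi : ℂ) ^ 2 * (((t : ℂ)) ^ 2 + (ξ₂ : ℂ) ^ 2))
        (4 * (Real.pi : ℂ) ^ 2 * (2 * (ξ₁ : ℂ))) ξ₁ := by
      have := (hsq.add_const ((ξ₂ : ℂ) ^ 2)).const_mul (4 * (Real.pi : ℂ) ^ 2)
      simpa using this
    have hDd : HasDerivAt (fun t : ℝ =>
        4 * (Real.pi : ℂ) ^ 2 * (((t : ℂ)) ^ 2 + (ξ₂ : ℂ) ^ 2) +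
          2 * (Real.pi : ℂ) * Complex.I * (γ : ℂ) * ((t : ℂ)))
        (4 * (Real.pi : ℂ) ^ 2 * (2 * (ξ₁ : ℂ)) + 2 * (Real.pi : ℂ) * Complex.I * (γ : ℂ)) ξ₁ := by
      have h2 := hre.const_mul (2 * (Real.pi : ℂ) * Complex.I * (γ : ℂ))
      simpa [mul_one, Pi.add_def] using hN.add h2
    have := hN.fun_div hDd hD
    refine this.congr_deriv ?_
    rw [pSymbD1]
    have hπc : (Real.pi : ℂ) ≠ 0 := by exact_mod_cast hπ.ne'
    rw [div_eq_div_iff (pow_ne_zero 2 hD) (pow_ne_zero 2 hw)]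
    ring
  · -- bound
    rw [pSymbD1, ← mul_div_assoc]
    have hnum : (ξ₁ : ℂ) * (2 * (Real.pi : ℂ) * Complex.I * (γ : ℂ) * ((ξ₁ : ℂ) ^ 2 - (ξ₂ : ℂ) ^ 2))
        = ((2 * Real.pi * γ * ξ₁ * (ξ₁ ^ 2 - ξ₂ ^ 2) : ℝ) : ℂ) * Complex.I := by
      push_cast; ring
    rw [hnum, key, norm_div, norm_mul, Complex.norm_real, Real.norm_eq_abs, Complex.norm_I, mul_one, norm_pow,
      Complex.sq_norm, Complex.normSq_add_mul_I]
    have hpos : 0 < (2 * Real.pi * (ξ₁ ^ 2 + ξ₂ ^ 2)) ^ 2 + (γ * ξ₁) ^ 2 := by positivity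
    rw [div_le_iff₀ hpos]
    have habs : |2 * Real.pi * γ * ξ₁ * (ξ₁ ^ 2 - ξ₂ ^ 2)|
        = 2 * Real.pi * (|γ * ξ₁| * |ξ₁ ^ 2 - ξ₂ ^ 2|) := by
      calc |2 * Real.pi * γ * ξ₁ * (ξ₁ ^ 2 - ξ₂ ^ 2)|
          = |(2 * Real.pi) * ((γ * ξ₁) * (ξ₁ ^ 2 - ξ₂ ^ 2))| := by ring_nf
        _ = |2 * Real.pi| * |(γ * ξ₁) * (ξ₁ ^ 2 - ξ₂ ^ 2)| := abs_mul _ _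
        _ = 2 * Real.pi * (|γ * ξ₁| * |ξ₁ ^ 2 - ξ₂ ^ 2|) := by
            rw [abs_mul (γ * ξ₁) (ξ₁ ^ 2 - ξ₂ ^ 2),
              abs_of_pos (by positivity : (0:ℝ) < 2 * Real.pi)]
    have hsub : |ξ₁ ^ 2 - ξ₂ ^ 2| ≤ ξ₁ ^ 2 + ξ₂ ^ 2 := by
      rw [abs_le]; constructor <;> nlinarith
    rw [habs]
    nlinarith [sq_nonneg (2 * Real.pi * (ξ₁ ^ 2 + ξ₂ ^ 2) - |γ * ξ₁|), _root_.sq_abs (γ * ξ₁),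
      abs_nonneg (γ * ξ₁), mul_le_mul_of_nonneg_left hsub (abs_nonneg (γ * ξ₁))]
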